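/- For the SIS sexually transmitted disease model, (I − P)^{-1} Φ = (I − P^E)^{-1} Φ^E = M, where P, Φ, P^E, Φ^E, M are the explicit 3×3 matrices: P = [[0, ασ/(ασ+γ), 0], [δ/(δ+β+γ), 0, β/(δ+β+γ)], [δ/(δ+2γ), γ/(δ+2γ), 0]], Φ = [[ωσ/(ασ+γ), ρωσ/(ασ+γ), 0], [ρωσ/(δ+β+γ), ρ²ωσ/(δ+β+γ), β/(δ+β+γ)], [ρωσ/(δ+2γ), ρ²ωσ/(δ+2γ), 0]], and M = [[σω(ασρ+δ+γ)/((ασ+δ+γ)γ), σωρ(ασρ+δ+γ)/((ασ+δ+γ)γ), ασβ(δ+2γ)/(γ(ασ+δ+γ)(β+δ+2γ))], [σω(ασρ+δ+γρ)/((ασ+δ+γ)γ), σωρ(ασρ+δ+γρ)/((ασ+δ+γ)γ), β(δ+2γ)(ασ+γ)/(γ(ασ+δ+γ)(β+δ+2γ))], [σω(ασρ+δ+γρ)/((ασ+δ+γ)γ), σωρ(ασρ+δ+γρ)/((ασ+δ+γ)γ), β(ασ(δ+γ)+γ²)/(γ(ασ+δ+γ)(β+δ+2γ))]]. -/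

import Mathlib

open Matrix

set_option linter.all false

set_option maxHeartbeats 4000000 in
private lemma auxP (α β γ δ ω ρ σ : ℝ)
    (hα : 0 < α) (hβ : 0 < β) (hγ : 0 < γ) (hδ : 0 < δ) (hω : 0 < ω)
    (hσ0 : 0 < σ) :
    (1 - !![0, α*σ/(α*σ+γ), 0;
         δ/(δ+β+γ), 0, β/(δ+β+γ);
         δ/(δ+2*γ), γ/(δ+2*γ), 0])⁻¹ *
      !![ω*σ/(α*σ+γ), ρ*ω*σ/(α*σ+γ), 0;
         ρ*ω*σ/(δ+β+γ), ρ^2*ω*σ/(δ+β+γ), β/(δ+β+γ);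
         ρ*ω*σ/(δ+2*γ), ρ^2*ω*σ/(δ+2*γ), 0] =
      !![σ*ω*(α*σ*ρ+δ+γ)/((α*σ+δ+γ)*γ), σ*ω*ρ*(α*σ*ρ+δ+γ)/((α*σ+δ+γ)*γ),
           α*σ*β*(δ+2*γ)/(γ*(α*σ+δ+γ)*(β+δ+2*γ));
         σ*ω*(α*σ*ρ+δ+γ*ρ)/((α*σ+δ+γ)*γ), σ*ω*ρ*(α*σ*ρ+δ+γ*ρ)/((α*σ+δ+γ)*γ),
           β*(δ+2*γ)*(α*σ+γ)/(γ*(α*σ+δ+γ)*(β+δ+2*γ));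
         σ*ω*(α*σ*ρ+δ+γ*ρ)/((α*σ+δ+γ)*γ), σ*ω*ρ*(α*σ*ρ+δ+γ*ρ)/((α*σ+δ+γ)*γ),
           β*(α*σ*(δ+γ)+γ^2)/(γ*(α*σ+δ+γ)*(β+δ+2*γ))] := by
  have h1 : (0:ℝ) < α*σ+γ := by positivity
  have h2 : (0:ℝ) < δ+β+γ := by positivity
  have h3 : (0:ℝ) < δ+2*γ := by positivity
  have h4 : (0:ℝ) < α*σ+δ+γ := by positivity
  have h5 : (0:ℝ) < β+δ+2*γ := by positivity
  have hsub : (1 : Matrix (Fin 3) (Fin 3) ℝ) - !![0, α*σ/(α*σ+γ), 0;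
         δ/(δ+β+γ), 0, β/(δ+β+γ);
         δ/(δ+2*γ), γ/(δ+2*γ), 0] =
      !![1, -(α*σ/(α*σ+γ)), 0;
         -(δ/(δ+β+γ)), 1, -(β/(δ+β+γ));
         -(δ/(δ+2*γ)), -(γ/(δ+2*γ)), 1] := by
    ext i j
    fin_cases i <;> fin_cases j <;>
      simp [Matrix.sub_apply, Matrix.one_apply]
  have hu : IsUnit ((1 : Matrix (Fin 3) (Fin 3) ℝ) - !![0, α*σ/(α*σ+γ), 0;
         δ/(δ+β+γ), 0, β/(δ+β+γ);
         δ/(δ+2*γ), γ/(δ+2*γ), 0]).det := by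
    have hdet : ((1 : Matrix (Fin 3) (Fin 3) ℝ) - !![0, α*σ/(α*σ+γ), 0;
         δ/(δ+β+γ), 0, β/(δ+β+γ);
         δ/(δ+2*γ), γ/(δ+2*γ), 0]).det
        = γ*(α*σ+δ+γ)*(β+δ+2*γ) / ((α*σ+γ)*(δ+β+γ)*(δ+2*γ)) := by
      rw [hsub, Matrix.det_fin_three]
      simp only [Matrix.cons_val', Matrix.cons_val_zero, Matrix.cons_val_one,
        Matrix.head_cons, Matrix.empty_val', Matrix.cons_val_fin_one, Matrix.head_fin_const, Matrix.cons_val, Fin.reduceFinMk,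
        Matrix.of_apply]
      field_simp
      ring
    rw [hdet]
    exact isUnit_iff_ne_zero.mpr (ne_of_gt (by positivity))
  have hmul : ((1 : Matrix (Fin 3) (Fin 3) ℝ) - !![0, α*σ/(α*σ+γ), 0;
         δ/(δ+β+γ), 0, β/(δ+β+γ);
         δ/(δ+2*γ), γ/(δ+2*γ), 0]) *
      !![σ*ω*(α*σ*ρ+δ+γ)/((α*σ+δ+γ)*γ), σ*ω*ρ*(α*σ*ρ+δ+γ)/((α*σ+δ+γ)*γ),
           α*σ*β*(δ+2*γ)/(γ*(α*σ+δ+γ)*(β+δ+2*γ));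
         σ*ω*(α*σ*ρ+δ+γ*ρ)/((α*σ+δ+γ)*γ), σ*ω*ρ*(α*σ*ρ+δ+γ*ρ)/((α*σ+δ+γ)*γ),
           β*(δ+2*γ)*(α*σ+γ)/(γ*(α*σ+δ+γ)*(β+δ+2*γ));
         σ*ω*(α*σ*ρ+δ+γ*ρ)/((α*σ+δ+γ)*γ), σ*ω*ρ*(α*σ*ρ+δ+γ*ρ)/((α*σ+δ+γ)*γ),
           β*(α*σ*(δ+γ)+γ^2)/(γ*(α*σ+δ+γ)*(β+δ+2*γ))] =
      !![ω*σ/(α*σ+γ), ρ*ω*σ/(α*σ+γ), 0;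
         ρ*ω*σ/(δ+β+γ), ρ^2*ω*σ/(δ+β+γ), β/(δ+β+γ);
         ρ*ω*σ/(δ+2*γ), ρ^2*ω*σ/(δ+2*γ), 0] := by
    rw [hsub, Matrix.mul_fin_three]
    ext i j
    fin_cases i <;> fin_cases j <;>
      · simp only [Matrix.cons_val', Matrix.cons_val_zero, Matrix.cons_val_one,
          Matrix.head_cons, Matrix.empty_val', Matrix.cons_val_fin_one, Matrix.head_fin_const, Matrix.cons_val, Fin.reduceFinMk,
          Matrix.of_apply]
        field_simp
        ring
  rw [← hmul, ← Matrix.mul_assoc, Matrix.nonsing_inv_mul _ hu, Matrix.one_mul]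

set_option maxHeartbeats 4000000 in
private lemma auxPE (α β γ δ ω ρ σ ε ε₂ : ℝ)
    (hα : 0 < α) (hβ : 0 < β) (hγ : 0 < γ) (hδ : 0 < δ) (hω : 0 < ω)
    (hσ0 : 0 < σ) (hε : 0 ≤ ε) (hε₂ : 0 ≤ ε₂) :
    (1 - !![ε/(α*σ+ε+γ), α*σ/(α*σ+ε+γ), 0;
         δ/(δ+ε₂+β+γ), ε₂/(δ+ε₂+β+γ),
           β/(δ+ε₂+β+γ);
         δ/(δ+ε₂+2*γ), γ/(δ+ε₂+2*γ),
           ε₂/(δ+ε₂+2*γ)])⁻¹ *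
      !![ω*σ/(α*σ+ε+γ), ρ*ω*σ/(α*σ+ε+γ), 0;
         ρ*ω*σ/(δ+ε₂+β+γ), ρ^2*ω*σ/(δ+ε₂+β+γ),
           β/(δ+ε₂+β+γ);
         ρ*ω*σ/(δ+ε₂+2*γ), ρ^2*ω*σ/(δ+ε₂+2*γ), 0] =
      !![σ*ω*(α*σ*ρ+δ+γ)/((α*σ+δ+γ)*γ), σ*ω*ρ*(α*σ*ρ+δ+γ)/((α*σ+δ+γ)*γ),
           α*σ*β*(δ+2*γ)/(γ*(α*σ+δ+γ)*(β+δ+2*γ));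
         σ*ω*(α*σ*ρ+δ+γ*ρ)/((α*σ+δ+γ)*γ), σ*ω*ρ*(α*σ*ρ+δ+γ*ρ)/((α*σ+δ+γ)*γ),
           β*(δ+2*γ)*(α*σ+γ)/(γ*(α*σ+δ+γ)*(β+δ+2*γ));
         σ*ω*(α*σ*ρ+δ+γ*ρ)/((α*σ+δ+γ)*γ), σ*ω*ρ*(α*σ*ρ+δ+γ*ρ)/((α*σ+δ+γ)*γ),
           β*(α*σ*(δ+γ)+γ^2)/(γ*(α*σ+δ+γ)*(β+δ+2*γ))] := by
  have h1 : (0:ℝ) < α*σ+γ := by positivity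
  have h2 : (0:ℝ) < δ+β+γ := by positivity
  have h3 : (0:ℝ) < δ+2*γ := by positivity
  have h4 : (0:ℝ) < α*σ+δ+γ := by positivity
  have h5 : (0:ℝ) < β+δ+2*γ := by positivity
  have hD1 : (0:ℝ) < α*σ+ε+γ := by positivity
  have hD2 : (0:ℝ) < δ+ε₂+β+γ := by linarith
  have hD3 : (0:ℝ) < δ+ε₂+2*γ := by linarith
  have hsub : (1 : Matrix (Fin 3) (Fin 3) ℝ) - !![ε/(α*σ+ε+γ), α*σ/(α*σ+ε+γ), 0;
         δ/(δ+ε₂+β+γ), ε₂/(δ+ε₂+β+γ),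
           β/(δ+ε₂+β+γ);
         δ/(δ+ε₂+2*γ), γ/(δ+ε₂+2*γ),
           ε₂/(δ+ε₂+2*γ)] =
      !![1-ε/(α*σ+ε+γ), -(α*σ/(α*σ+ε+γ)), 0;
         -(δ/(δ+ε₂+β+γ)), 1-ε₂/(δ+ε₂+β+γ),
           -(β/(δ+ε₂+β+γ));
         -(δ/(δ+ε₂+2*γ)), -(γ/(δ+ε₂+2*γ)),
           1-ε₂/(δ+ε₂+2*γ)] := by
    ext i j
    fin_cases i <;> fin_cases j <;>
      simp [Matrix.sub_apply, Matrix.one_apply]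
  have hu : IsUnit ((1 : Matrix (Fin 3) (Fin 3) ℝ) - !![ε/(α*σ+ε+γ), α*σ/(α*σ+ε+γ), 0;
         δ/(δ+ε₂+β+γ), ε₂/(δ+ε₂+β+γ),
           β/(δ+ε₂+β+γ);
         δ/(δ+ε₂+2*γ), γ/(δ+ε₂+2*γ),
           ε₂/(δ+ε₂+2*γ)]).det := by
    have hdet : ((1 : Matrix (Fin 3) (Fin 3) ℝ) - !![ε/(α*σ+ε+γ), α*σ/(α*σ+ε+γ), 0;
         δ/(δ+ε₂+β+γ), ε₂/(δ+ε₂+β+γ),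
           β/(δ+ε₂+β+γ);
         δ/(δ+ε₂+2*γ), γ/(δ+ε₂+2*γ),
           ε₂/(δ+ε₂+2*γ)]).det
        = γ*(α*σ+δ+γ)*(β+δ+2*γ) / ((α*σ+ε+γ)*(δ+ε₂+β+γ)*(δ+ε₂+2*γ)) := by
      rw [hsub, Matrix.det_fin_three]
      simp only [Matrix.cons_val', Matrix.cons_val_zero, Matrix.cons_val_one,
        Matrix.head_cons, Matrix.empty_val', Matrix.cons_val_fin_one, Matrix.head_fin_const, Matrix.cons_val, Fin.reduceFinMk,
        Matrix.of_apply]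
      field_simp
      ring
    rw [hdet]
    exact isUnit_iff_ne_zero.mpr (ne_of_gt (by positivity))
  have hmul : ((1 : Matrix (Fin 3) (Fin 3) ℝ) - !![ε/(α*σ+ε+γ), α*σ/(α*σ+ε+γ), 0;
         δ/(δ+ε₂+β+γ), ε₂/(δ+ε₂+β+γ),
           β/(δ+ε₂+β+γ);
         δ/(δ+ε₂+2*γ), γ/(δ+ε₂+2*γ),
           ε₂/(δ+ε₂+2*γ)]) *
      !![σ*ω*(α*σ*ρ+δ+γ)/((α*σ+δ+γ)*γ), σ*ω*ρ*(α*σ*ρ+δ+γ)/((α*σ+δ+γ)*γ),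
           α*σ*β*(δ+2*γ)/(γ*(α*σ+δ+γ)*(β+δ+2*γ));
         σ*ω*(α*σ*ρ+δ+γ*ρ)/((α*σ+δ+γ)*γ), σ*ω*ρ*(α*σ*ρ+δ+γ*ρ)/((α*σ+δ+γ)*γ),
           β*(δ+2*γ)*(α*σ+γ)/(γ*(α*σ+δ+γ)*(β+δ+2*γ));
         σ*ω*(α*σ*ρ+δ+γ*ρ)/((α*σ+δ+γ)*γ), σ*ω*ρ*(α*σ*ρ+δ+γ*ρ)/((α*σ+δ+γ)*γ),
           β*(α*σ*(δ+γ)+γ^2)/(γ*(α*σ+δ+γ)*(β+δ+2*γ))] =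
      !![ω*σ/(α*σ+ε+γ), ρ*ω*σ/(α*σ+ε+γ), 0;
         ρ*ω*σ/(δ+ε₂+β+γ), ρ^2*ω*σ/(δ+ε₂+β+γ),
           β/(δ+ε₂+β+γ);
         ρ*ω*σ/(δ+ε₂+2*γ), ρ^2*ω*σ/(δ+ε₂+2*γ), 0] := by
    rw [hsub, Matrix.mul_fin_three]
    ext i j
    fin_cases i <;> fin_cases j <;>
      · simp only [Matrix.cons_val', Matrix.cons_val_zero, Matrix.cons_val_one,
          Matrix.head_cons, Matrix.empty_val', Matrix.cons_val_fin_one, Matrix.head_fin_const, Matrix.cons_val, Fin.reduceFinMk,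
          Matrix.of_apply]
        field_simp
        ring
  rw [← hmul, ← Matrix.mul_assoc, Matrix.nonsing_inv_mul _ hu, Matrix.one_mul]

set_option maxHeartbeats 4000000 in
theorem stmt_11 (α β γ δ ω ρ σ : ℝ)
    (hα : 0 < α) (hβ : 0 < β) (hγ : 0 < γ) (hδ : 0 < δ) (hω : 0 < ω)
    (hρ : ρ ∈ Set.Icc (0:ℝ) 1) (hσ : σ ∈ Set.Ioo (0:ℝ) 1) :
    let P : Matrix (Fin 3) (Fin 3) ℝ :=
      !![0, α*σ/(α*σ+γ), 0;
         δ/(δ+β+γ), 0, β/(δ+β+γ);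
         δ/(δ+2*γ), γ/(δ+2*γ), 0]
    let Φ : Matrix (Fin 3) (Fin 3) ℝ :=
      !![ω*σ/(α*σ+γ), ρ*ω*σ/(α*σ+γ), 0;
         ρ*ω*σ/(δ+β+γ), ρ^2*ω*σ/(δ+β+γ), β/(δ+β+γ);
         ρ*ω*σ/(δ+2*γ), ρ^2*ω*σ/(δ+2*γ), 0]
    let PE : Matrix (Fin 3) (Fin 3) ℝ :=
      !![ω*(1-(1-ρ)*(1-σ))/(α*σ+ω*(1-(1-ρ)*(1-σ))+γ), α*σ/(α*σ+ω*(1-(1-ρ)*(1-σ))+γ), 0;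
         δ/(δ+ρ*ω*(1-(1-ρ)*(1-σ))+β+γ), ρ*ω*(1-(1-ρ)*(1-σ))/(δ+ρ*ω*(1-(1-ρ)*(1-σ))+β+γ),
           β/(δ+ρ*ω*(1-(1-ρ)*(1-σ))+β+γ);
         δ/(δ+ρ*ω*(1-(1-ρ)*(1-σ))+2*γ), γ/(δ+ρ*ω*(1-(1-ρ)*(1-σ))+2*γ),
           ρ*ω*(1-(1-ρ)*(1-σ))/(δ+ρ*ω*(1-(1-ρ)*(1-σ))+2*γ)]
    let ΦE : Matrix (Fin 3) (Fin 3) ℝ :=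
      !![ω*σ/(α*σ+ω*(1-(1-ρ)*(1-σ))+γ), ρ*ω*σ/(α*σ+ω*(1-(1-ρ)*(1-σ))+γ), 0;
         ρ*ω*σ/(δ+ρ*ω*(1-(1-ρ)*(1-σ))+β+γ), ρ^2*ω*σ/(δ+ρ*ω*(1-(1-ρ)*(1-σ))+β+γ),
           β/(δ+ρ*ω*(1-(1-ρ)*(1-σ))+β+γ);
         ρ*ω*σ/(δ+ρ*ω*(1-(1-ρ)*(1-σ))+2*γ), ρ^2*ω*σ/(δ+ρ*ω*(1-(1-ρ)*(1-σ))+2*γ), 0]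
    let M : Matrix (Fin 3) (Fin 3) ℝ :=
      !![σ*ω*(α*σ*ρ+δ+γ)/((α*σ+δ+γ)*γ), σ*ω*ρ*(α*σ*ρ+δ+γ)/((α*σ+δ+γ)*γ),
           α*σ*β*(δ+2*γ)/(γ*(α*σ+δ+γ)*(β+δ+2*γ));
         σ*ω*(α*σ*ρ+δ+γ*ρ)/((α*σ+δ+γ)*γ), σ*ω*ρ*(α*σ*ρ+δ+γ*ρ)/((α*σ+δ+γ)*γ),
           β*(δ+2*γ)*(α*σ+γ)/(γ*(α*σ+δ+γ)*(β+δ+2*γ));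
         σ*ω*(α*σ*ρ+δ+γ*ρ)/((α*σ+δ+γ)*γ), σ*ω*ρ*(α*σ*ρ+δ+γ*ρ)/((α*σ+δ+γ)*γ),
           β*(α*σ*(δ+γ)+γ^2)/(γ*(α*σ+δ+γ)*(β+δ+2*γ))]
    (1 - P)⁻¹ * Φ = M ∧ (1 - PE)⁻¹ * ΦE = M := by
  obtain ⟨hρ0, hρ1⟩ := hρ
  obtain ⟨hσ0, hσ1⟩ := hσ
  intro P Φ PE ΦE M
  exact ⟨auxP α β γ δ ω ρ σ hα hβ hγ hδ hω hσ0,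
    auxPE α β γ δ ω ρ σ (ω*(1-(1-ρ)*(1-σ))) (ρ*ω*(1-(1-ρ)*(1-σ))) hα hβ hγ hδ hω hσ0
      (mul_nonneg (le_of_lt hω) (by nlinarith)) (by nlinarith [mul_nonneg (mul_nonneg hρ0 (le_of_lt hω)) (by nlinarith : (0:ℝ) ≤ 1-(1-ρ)*(1-σ))])⟩
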